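/- Let f : ℝ^d → ℝ^d be k-Lipschitz with k > 0 and ν a probability measure on ℝ^d. Then L(f_#ν) ≤ k·L(ν), where L is the length functional L(μ) = min{α ≥ 0 : αμ ≥ H^1⌊supp μ} if supp μ is connected, and +∞ otherwise. -/
import Mathlib


open MeasureTheory Metric Filter Set
open scoped ENNReal NNReal Topology

noncomputable section

/-- The support of a measure: points all of whose neighborhoods have positive mass. -/
def msupport {E : Type*} [MetricSpace E] [MeasurableSpace E] (ν : Measure E) : Set E :=
  {x | ∀ r > 0, 0 < ν (ball x r)}

open Classical in
/-- The length functional: `min {α ≥ 0 | α • ν ≥ H¹⌊supp ν}` if `supp ν` is connected,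
`+∞` otherwise (with `min ∅ = +∞`). -/
noncomputable def lengthF {E : Type*} [MetricSpace E] [MeasurableSpace E] [BorelSpace E]
    (ν : Measure E) : ℝ≥0∞ :=
  if IsConnected (msupport ν) then
    sInf {α : ℝ≥0∞ | (μH[1] : Measure E).restrict (msupport ν) ≤ α • ν}
  else ⊤

/-- The p-th power of the p-Wasserstein distance, as an infimum over couplings. -/
noncomputable def Wpp {E : Type*} [MetricSpace E] [MeasurableSpace E]
    (p : ℝ) (μ ν : Measure E) : ℝ≥0∞ :=
  ⨅ (γ : Measure (E × E)) (_ : γ.map Prod.fst = μ ∧ γ.map Prod.snd = ν),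
    ∫⁻ z, edist z.1 z.2 ^ p ∂γ

/-- The energy `W_p^p(ρ₀, ν) + Λ L(ν)`. -/
noncomputable def energyF {E : Type*} [MetricSpace E] [MeasurableSpace E] [BorelSpace E]
    (p Λ : ℝ) (ρ₀ ν : Measure E) : ℝ≥0∞ :=
  Wpp p ρ₀ ν + ENNReal.ofReal Λ * lengthF ν

/-- Kuratowski convergence of a sequence of (closed) sets. -/
def KuraTendsto {E : Type*} [MetricSpace E] (C : ℕ → Set E) (L : Set E) : Prop :=
  (∀ u : ℕ → E, (∀ n, u n ∈ C n) → ∀ x : E, MapClusterPt x atTop u → x ∈ L) ∧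
  (∀ x ∈ L, ∃ u : ℕ → E, (∀ n, u n ∈ C n) ∧ Tendsto u atTop (𝓝 x))

section Helpers

variable {E : Type*} [MetricSpace E] [MeasurableSpace E]

lemma isClosed_msupport (ν : Measure E) : IsClosed (msupport ν) := by
  rw [← isOpen_compl_iff, Metric.isOpen_iff]
  intro x hx
  simp only [msupport, mem_compl_iff, mem_setOf_eq, not_forall, not_lt, nonpos_iff_eq_zero,
    exists_prop] at hx
  obtain ⟨r, hr, h0⟩ := hx
  refine ⟨r / 2, by positivity, fun y hy hymem => ?_⟩
  rw [mem_ball] at hy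
  have hsub : ball y (r / 2) ⊆ ball x r := by
    intro z hz
    rw [mem_ball] at hz ⊢
    calc dist z x ≤ dist z y + dist y x := dist_triangle _ _ _
      _ < r / 2 + r / 2 := add_lt_add hz hy
      _ = r := by ring
  have : ν (ball y (r / 2)) = 0 := measure_mono_null hsub h0
  exact absurd (hymem (r / 2) (by positivity)) (by simp [this])

lemma msupport_compl_null [SecondCountableTopology E] (ν : Measure E) :
    ν (msupport ν)ᶜ = 0 := by
  apply measure_null_of_locally_null
  intro x hx
  simp only [msupport, mem_compl_iff, mem_setOf_eq, not_forall, not_lt, nonpos_iff_eq_zero,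
    exists_prop] at hx
  obtain ⟨r, hr, h0⟩ := hx
  exact ⟨ball x r, mem_nhdsWithin_of_mem_nhds (ball_mem_nhds x hr), h0⟩

lemma image_msupport_subset {f : E → E} (hfc : Continuous f) (ν : Measure E)
    [BorelSpace E] : f '' msupport ν ⊆ msupport (ν.map f) := by
  rintro _ ⟨x, hx, rfl⟩ r hr
  rw [Measure.map_apply hfc.measurable measurableSet_ball]
  obtain ⟨s, hs, hsub⟩ := Metric.isOpen_iff.1 (isOpen_ball.preimage hfc) x
    (show x ∈ f ⁻¹' ball (f x) r by simp [mem_preimage, mem_ball, hr])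
  exact lt_of_lt_of_le (hx s hs) (measure_mono hsub)

lemma msupport_map_subset [SecondCountableTopology E] [BorelSpace E] {f : E → E}
    (hfc : Continuous f) (ν : Measure E) (hK : IsCompact (msupport ν)) :
    msupport (ν.map f) ⊆ f '' msupport ν := by
  intro y hy
  by_contra hyn
  have hcl : IsClosed (f '' msupport ν) := (hK.image hfc).isClosed
  obtain ⟨r, hr, hsub⟩ := Metric.isOpen_iff.1 hcl.isOpen_compl y hyn
  have h0 : ν.map f (ball y r) = 0 := by
    rw [Measure.map_apply hfc.measurable measurableSet_ball]
    refine measure_mono_null ?_ (msupport_compl_null ν)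
    intro x hxball hxsupp
    exact hsub hxball (mem_image_of_mem f hxsupp)
  exact absurd (hy r hr) (by simp [h0])

lemma ofReal_dist_le_hausdorff [BorelSpace E] {S : Set E} (hS : IsPreconnected S)
    {x y : E} (hx : x ∈ S) (hy : y ∈ S) :
    ENNReal.ofReal (dist x y) ≤ μH[1] S := by
  have himg : IsPreconnected ((dist x ·) '' S) :=
    hS.image _ (LipschitzWith.dist_right x).continuous.continuousOn
  have hIcc : Icc (0 : ℝ) (dist x y) ⊆ (dist x ·) '' S :=
    himg.Icc_subset ⟨x, hx, by simp⟩ ⟨y, hy, rfl⟩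
  calc ENNReal.ofReal (dist x y) = volume (Icc (0 : ℝ) (dist x y)) := by
        rw [Real.volume_Icc]; simp
    _ ≤ volume ((dist x ·) '' S) := measure_mono hIcc
    _ = μH[1] ((dist x ·) '' S) := by rw [MeasureTheory.hausdorffMeasure_real]
    _ ≤ ((1 : ℝ≥0) : ℝ≥0∞) ^ (1 : ℝ) * μH[1] S :=
        (LipschitzWith.dist_right x).hausdorffMeasure_image_le zero_le_one S
    _ = μH[1] S := by simp

end Helpers

/-- if `f` is `k`-Lipschitz with `k > 0` and `ν` is a probability measure,
then `L(f#ν) ≤ k · L(ν)`. -/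
theorem stmt_6 {d : ℕ} (k : ℝ≥0) (hk : 0 < k)
    (f : EuclideanSpace ℝ (Fin d) → EuclideanSpace ℝ (Fin d)) (hf : LipschitzWith k f)
    (ν : Measure (EuclideanSpace ℝ (Fin d))) [IsProbabilityMeasure ν] :
    lengthF (ν.map f) ≤ (k : ℝ≥0∞) * lengthF ν := by
  classical
  by_cases hfin : lengthF ν < ⊤
  swap
  · push_neg at hfin
    rw [top_le_iff.mp hfin, ENNReal.mul_top (by exact_mod_cast hk.ne')]
    exact le_top
  have hconn : IsConnected (msupport ν) := by
    by_contra h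
    rw [lengthF, if_neg h] at hfin
    exact absurd rfl hfin.ne
  set S : Set ℝ≥0∞ := {α : ℝ≥0∞ |
    (μH[1] : Measure (EuclideanSpace ℝ (Fin d))).restrict (msupport ν) ≤ α • ν} with hSdef
  have hL : lengthF ν = sInf S := by rw [lengthF, if_pos hconn]
  rw [hL] at hfin ⊢
  have hSne : S.Nonempty := by
    by_contra h
    rw [not_nonempty_iff_eq_empty] at h
    rw [h, sInf_empty] at hfin
    exact absurd rfl hfin.ne
  -- the infimum is attained
  have hattain : (μH[1] : Measure (EuclideanSpace ℝ (Fin d))).restrict (msupport ν)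
      ≤ (sInf S) • ν := by
    rw [Measure.le_iff]
    intro A hA
    rw [Measure.restrict_apply hA, Measure.smul_apply, smul_eq_mul]
    have key : ∀ α : S, μH[1] (A ∩ msupport ν) ≤ (α : ℝ≥0∞) * ν A := by
      rintro ⟨α, hα⟩
      have := Measure.le_iff.mp hα A hA
      rwa [Measure.restrict_apply hA, Measure.smul_apply, smul_eq_mul] at this
    have h1 : μH[1] (A ∩ msupport ν) ≤ ⨅ α : S, (α : ℝ≥0∞) * ν A := le_iInf key
    rwa [← ENNReal.iInf_mul' (fun h => absurd h (measure_ne_top ν A))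
      (fun _ => hSne.to_subtype), ← sInf_eq_iInf'] at h1
  -- finite H¹ mass of the support
  have hH1 : μH[1] (msupport ν) < ⊤ := by
    have := Measure.le_iff.mp hattain univ MeasurableSet.univ
    rw [Measure.restrict_apply MeasurableSet.univ, univ_inter, Measure.smul_apply,
      smul_eq_mul, measure_univ, mul_one] at this
    exact lt_of_le_of_lt this hfin
  -- the support is compact
  obtain ⟨x₀, hx₀⟩ := hconn.nonempty
  have hKcomp : IsCompact (msupport ν) := by
    refine (isCompact_closedBall x₀ (μH[1] (msupport ν)).toReal).of_isClosed_subset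
      (isClosed_msupport ν) (fun y hy => ?_)
    rw [mem_closedBall, dist_comm]
    rw [← ENNReal.ofReal_le_iff_le_toReal hH1.ne]
    exact ofReal_dist_le_hausdorff hconn.isPreconnected hx₀ hy
  have heq : msupport (ν.map f) = f '' msupport ν :=
    Subset.antisymm (msupport_map_subset hf.continuous ν hKcomp)
      (image_msupport_subset hf.continuous ν)
  have hconn' : IsConnected (msupport (ν.map f)) := by
    rw [heq]; exact hconn.image f hf.continuous.continuousOn
  rw [lengthF, if_pos hconn']
  refine sInf_le ?_
  show (μH[1] : Measure (EuclideanSpace ℝ (Fin d))).restrict (msupport (ν.map f))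
    ≤ ((k : ℝ≥0∞) * sInf S) • (ν.map f)
  rw [Measure.le_iff]
  intro A hA
  rw [Measure.restrict_apply hA, Measure.smul_apply, smul_eq_mul,
    Measure.map_apply hf.continuous.measurable hA, heq]
  have hpre : (μH[1] : Measure (EuclideanSpace ℝ (Fin d))) (f ⁻¹' A ∩ msupport ν)
      ≤ sInf S * ν (f ⁻¹' A) := by
    have := Measure.le_iff.mp hattain (f ⁻¹' A) (hA.preimage hf.continuous.measurable)
    rwa [Measure.restrict_apply (hA.preimage hf.continuous.measurable), Measure.smul_apply,
      smul_eq_mul] at this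
  calc μH[1] (A ∩ f '' msupport ν)
      ≤ μH[1] (f '' (f ⁻¹' A ∩ msupport ν)) := by
        refine measure_mono ?_
        rintro y ⟨hyA, x, hx, rfl⟩
        exact ⟨x, ⟨hyA, hx⟩, rfl⟩
    _ ≤ (k : ℝ≥0∞) ^ (1 : ℝ) * μH[1] (f ⁻¹' A ∩ msupport ν) :=
        hf.hausdorffMeasure_image_le zero_le_one _
    _ = (k : ℝ≥0∞) * μH[1] (f ⁻¹' A ∩ msupport ν) := by rw [ENNReal.rpow_one]
    _ ≤ (k : ℝ≥0∞) * (sInf S * ν (f ⁻¹' A)) := by gcongr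
    _ = (k : ℝ≥0∞) * sInf S * ν (f ⁻¹' A) := (mul_assoc _ _ _).symm

end
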